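/- The transition matrix of the money-exchange chain is symmetric: p(ξ, ξ') = p(ξ', ξ) for all ξ, ξ' ∈ S. In particular the chain is reversible with respect to, and doubly stochastic for, the uniform measure on S. -/

import Mathlib

open scoped Classical
open Finset

section MoneyExchange

variable {V : Type*} [Fintype V] [DecidableEq V] {K : ℕ}

/-- Move one coin from `x` to `y`. -/
def tau (x y : V) (ξ : V → ℤ) : V → ℤ :=
  fun z => ξ z - (if z = x then 1 else 0) + (if z = y then 1 else 0)

/-- Total (nonpositive) debt of the customers of bank `i`:
`∑_{z ∈ Vᵢ} ξ(z) · 1{ξ(z) < 0}`. -/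
def bankDebt (bank : V → Fin K) (ξ : V → ℤ) (i : Fin K) : ℤ :=
  ∑ z ∈ univ.filter fun z => bank z = i, min (ξ z) 0

/-- Admissible configurations: total money `M` and each bank lends at most `Rᵢ`. -/
def admissible (bank : V → Fin K) (R : Fin K → ℕ) (M : ℕ) (ξ : V → ℤ) : Prop :=
  (∑ z, ξ z) = (M : ℤ) ∧ ∀ i, -(R i : ℤ) ≤ bankDebt bank ξ i

/-- The move from `x` is allowed in `ξ`: `x` has a coin or its bank is nonempty. -/
def allowed (bank : V → Fin K) (R : Fin K → ℕ) (ξ : V → ℤ) (x : V) : Prop :=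
  0 < ξ x ∨ -(R (bank x) : ℤ) < bankDebt bank ξ (bank x)

/-- One-step transition probability of the money-exchange chain: each ordered
adjacent pair `(x, y)` is chosen with probability `1/(2|E|)`, and a coin moves
from `x` to `y` whenever the move from `x` is allowed; otherwise nothing happens. -/
noncomputable def step (G : SimpleGraph V) (bank : V → Fin K) (R : Fin K → ℕ)
    (ξ ξ' : V → ℤ) : ℝ :=
  (((univ.filter fun pq : V × V =>
        G.Adj pq.1 pq.2 ∧ allowed bank R ξ pq.1 ∧ tau pq.1 pq.2 ξ = ξ').card : ℝ)
      + if ξ' = ξ then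
          ((univ.filter fun pq : V × V =>
            G.Adj pq.1 pq.2 ∧ ¬ allowed bank R ξ pq.1).card : ℝ)
        else 0)
    / ((univ.filter fun pq : V × V => G.Adj pq.1 pq.2).card : ℝ)

/-- `t`-step transition probability of the money-exchange chain. -/
noncomputable def stepT (G : SimpleGraph V) (bank : V → Fin K) (R : Fin K → ℕ) :
    ℕ → (V → ℤ) → (V → ℤ) → ℝ
  | 0, ξ, ξ' => if ξ = ξ' then 1 else 0
  | t + 1, ξ, ξ' =>
      ∑ η ∈ insert ξ ((univ.filter fun pq : V × V => G.Adj pq.1 pq.2).image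
          fun pq => tau pq.1 pq.2 ξ),
        step G bank R ξ η * stepT G bank R t η ξ'

end MoneyExchange

section Aux

variable {V : Type*} [Fintype V] [DecidableEq V] {K : ℕ}

lemma tau_tau (x y : V) (ξ : V → ℤ) : tau y x (tau x y ξ) = ξ := by
  funext z; simp only [tau]; ring

lemma bankDebt_tau (bank : V → Fin K) (ξ : V → ℤ) {x y : V} (hxy : x ≠ y) (i : Fin K) :
    bankDebt bank (tau x y ξ) i = bankDebt bank ξ i
      + (if bank x = i then min (ξ x - 1) 0 - min (ξ x) 0 else 0)
      + (if bank y = i then min (ξ y + 1) 0 - min (ξ y) 0 else 0) := by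
  unfold bankDebt
  rw [Finset.sum_filter, Finset.sum_filter]
  have key : ∀ z, (if bank z = i then min (tau x y ξ z) 0 else 0)
      = (if bank z = i then min (ξ z) 0 else 0)
        + (if z = x then (if bank x = i then min (ξ x - 1) 0 - min (ξ x) 0 else 0) else 0)
        + (if z = y then (if bank y = i then min (ξ y + 1) 0 - min (ξ y) 0 else 0) else 0) := by
    intro z
    by_cases hzx : z = x <;> by_cases hzy : z = y <;>
      simp_all [tau] <;> split_ifs <;> omega
  rw [Finset.sum_congr rfl fun z _ => key z]
  rw [Finset.sum_add_distrib, Finset.sum_add_distrib,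
    Finset.sum_ite_eq' univ x, Finset.sum_ite_eq' univ y]
  simp

lemma allowed_swap {bank : V → Fin K} {R : Fin K → ℕ} {M : ℕ} {ξ : V → ℤ} {x y : V}
    (hxy : x ≠ y) (hξ : admissible bank R M ξ) (hx : allowed bank R ξ x) :
    allowed bank R (tau x y ξ) y := by
  have hτy : tau x y ξ y = ξ y + 1 := by simp [tau, hxy.symm]
  by_cases hy : 0 < ξ y + 1
  · exact Or.inl (by rw [hτy]; exact hy)
  · right
    rw [bankDebt_tau bank ξ hxy (bank y), if_pos rfl]
    have hd := hξ.2 (bank y)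
    by_cases hb : bank x = bank y
    · rw [if_pos hb]
      rcases hx with h0 | h0
      · omega
      · rw [hb] at h0; omega
    · rw [if_neg hb]; omega

end Aux

theorem symmetry {V : Type*} [Fintype V] [DecidableEq V] {K : ℕ} (hK : 1 ≤ K)
    (G : SimpleGraph V) (hG : G.Connected) (hN : 2 ≤ Fintype.card V)
    (bank : V → Fin K) (R : Fin K → ℕ) (M : ℕ)
    (ξ ξ' : V → ℤ) (hξ : admissible bank R M ξ) (hξ' : admissible bank R M ξ') :
    step G bank R ξ ξ' = step G bank R ξ' ξ := by
  rcases eq_or_ne ξ' ξ with h | h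
  · subst h; rfl
  · have hcard : (univ.filter fun pq : V × V =>
        G.Adj pq.1 pq.2 ∧ allowed bank R ξ pq.1 ∧ tau pq.1 pq.2 ξ = ξ').card
      = (univ.filter fun pq : V × V =>
        G.Adj pq.1 pq.2 ∧ allowed bank R ξ' pq.1 ∧ tau pq.1 pq.2 ξ' = ξ).card := by
      refine Finset.card_nbij' Prod.swap Prod.swap ?_ ?_ ?_ ?_
      · rintro ⟨x, y⟩ hm
        simp only [Finset.mem_coe, Finset.mem_filter, Finset.mem_univ, true_and, Prod.swap] at hm ⊢
        obtain ⟨hadj, hall, htau⟩ := hm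
        exact ⟨hadj.symm, by rw [← htau]; exact allowed_swap hadj.ne hξ hall,
          by rw [← htau, tau_tau]⟩
      · rintro ⟨y, x⟩ hm
        simp only [Finset.mem_coe, Finset.mem_filter, Finset.mem_univ, true_and, Prod.swap] at hm ⊢
        obtain ⟨hadj, hall, htau⟩ := hm
        exact ⟨hadj.symm, by rw [← htau]; exact allowed_swap hadj.ne hξ' hall,
          by rw [← htau, tau_tau]⟩
      · intro pq _; simp
      · intro pq _; simp
    unfold step
    rw [if_neg h, if_neg (Ne.symm h), hcard]
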